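/- Suppose κ and λ are regular cardinals with κ ≤ λ and μ is a regular cardinal with μ < λ. Then no cofinal subset I of the product poset κ × λ (with the coordinatewise order) is μ-like; that is, every cofinal I ⊆ κ × λ contains an element lying above μ-many elements of I. -/

import Mathlib

open Cardinal

universe u

private lemma bounded_of_mk_lt' {c : Cardinal.{u}} (hc : c.IsRegular)
    {s : Set c.ord.ToType} (h : #s < c) : Set.Bounded (· < ·) s := by
  have i : IsWellOrder c.ord.ToType (· < ·) := isWellOrder_lt
  by_contra hb
  rw [Set.not_bounded_iff] at hb
  have hs : IsCofinal s := fun a => by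
    obtain ⟨b, hb', hab⟩ := hb a
    exact ⟨b, hb', not_lt.1 hab⟩
  have := Order.cof_le hs
  rw [Ordinal.cof_toType, hc.cof_eq] at this
  exact absurd h (not_lt.2 this)

private lemma le_mk_of_unbounded' {c : Cardinal.{u}} (hc : c.IsRegular)
    {s : Set c.ord.ToType} (h : Set.Unbounded (· < ·) s) : c ≤ #s := by
  have i : IsWellOrder c.ord.ToType (· < ·) := isWellOrder_lt
  have hs : IsCofinal s := fun a => by
    obtain ⟨b, hb', hab⟩ := h a
    exact ⟨b, hb', not_lt.1 hab⟩
  have := Order.cof_le hs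
  rwa [Ordinal.cof_toType, hc.cof_eq] at this

/-- Lemma: for regular cardinals `κ ≤ λ` and regular `μ < λ`, no cofinal subset of
the product poset `κ × λ` is `μ`-like: every cofinal `I ⊆ κ × λ` has an element
lying above `μ`-many elements of `I`. -/
theorem cofinal_subset_of_prod_not_muLike
    (κ lam mu : Cardinal.{u})
    (hκ : κ.IsRegular) (hlam : lam.IsRegular) (hmu : mu.IsRegular)
    (hkl : κ ≤ lam) (hml : mu < lam) :
    ∀ I : Set (κ.ord.ToType × lam.ord.ToType),
      (∀ x : κ.ord.ToType × lam.ord.ToType, ∃ y ∈ I, x ≤ y) →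
      ∃ y ∈ I, mu ≤ #{z : κ.ord.ToType × lam.ord.ToType // z ∈ I ∧ z ≤ y} := by
  intro I hI
  have hA : Nonempty κ.ord.ToType := by
    rw [Ordinal.toType_nonempty_iff_ne_zero]
    simpa using hκ.pos.ne'
  obtain ⟨x₀⟩ := hA
  -- the "restricted" families
  set J : κ.ord.ToType → Set (κ.ord.ToType × lam.ord.ToType) :=
    fun a => {z | z ∈ I ∧ z.1 ≤ a} with hJ
  -- key claim: some J a has at least mu elements
  have key : ∃ a : κ.ord.ToType, mu ≤ #(J a) := by
    rcases lt_or_ge mu κ with hmk | hkm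
    · -- mu < κ : take any mu elements of I and bound their first coordinates
      have hIunb : Set.Unbounded (· < ·) (Prod.snd '' I) := by
        intro b
        obtain ⟨y, hyI, hy⟩ := hI (x₀, b)
        exact ⟨y.2, ⟨y, hyI, rfl⟩, not_lt.2 hy.2⟩
      have hmuI : mu ≤ #I :=
        le_trans hml.le (le_trans (le_mk_of_unbounded' hlam hIunb) Cardinal.mk_image_le)
      obtain ⟨p, hp⟩ := Cardinal.le_mk_iff_exists_set.1 hmuI
      -- bound the first coordinates of p
      have h1 : #((fun z : I => z.1.1) '' p) < κ :=
        lt_of_le_of_lt (le_trans Cardinal.mk_image_le hp.le) hmk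
      obtain ⟨a, ha⟩ := bounded_of_mk_lt' hκ h1
      refine ⟨a, ?_⟩
      rw [← hp]
      refine Cardinal.mk_le_of_injective (f := fun w : p =>
        (⟨(w : I), (w : I).2, (ha _ ⟨w, w.2, rfl⟩).le⟩ : J a)) ?_
      intro w1 w2 h
      simp only [Subtype.mk.injEq] at h
      exact Subtype.ext (Subtype.ext h)
    · -- κ ≤ mu : then κ < lam; find a with snd '' (J a) unbounded in lam
      have hklt : κ < lam := lt_of_le_of_lt hkm hml
      have claim : ∃ a, Set.Unbounded (· < ·) (Prod.snd '' (J a)) := by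
        by_contra h
        push_neg at h
        have h' : ∀ a, Set.Bounded (· < ·) (Prod.snd '' (J a)) :=
          fun a => (Set.not_unbounded_iff _).1 (h a)
        choose g hg using h'
        have hrange : #(Set.range g) < lam :=
          lt_of_le_of_lt (le_trans Cardinal.mk_range_le
            (by rw [Cardinal.mk_toType, Cardinal.card_ord])) hklt
        obtain ⟨b, hb⟩ := bounded_of_mk_lt' hlam hrange
        obtain ⟨y, hyI, hy⟩ := hI (x₀, b)
        have h1 : y.2 < g y.1 := hg y.1 y.2 ⟨y, ⟨hyI, le_refl _⟩, rfl⟩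
        have h2 : g y.1 < b := hb _ ⟨y.1, rfl⟩
        exact absurd hy.2 (not_le.2 (h1.trans h2))
      obtain ⟨a, ha⟩ := claim
      exact ⟨a, le_trans hml.le (le_trans (le_mk_of_unbounded' hlam ha)
        Cardinal.mk_image_le)⟩
  -- finish: take mu elements of J a, bound second coordinates, apply cofinality
  obtain ⟨a, hmuJ⟩ := key
  obtain ⟨p, hp⟩ := Cardinal.le_mk_iff_exists_set.1 hmuJ
  have h2 : #((fun z : J a => z.1.2) '' p) < lam :=
    lt_of_le_of_lt (le_trans Cardinal.mk_image_le hp.le) hml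
  obtain ⟨b, hb⟩ := bounded_of_mk_lt' hlam h2
  obtain ⟨y, hyI, hy⟩ := hI (a, b)
  refine ⟨y, hyI, ?_⟩
  rw [← hp]
  refine Cardinal.mk_le_of_injective (f := fun w : p =>
    (⟨(w : J a), (w : J a).2.1,
      le_trans ⟨(w : J a).2.2, (hb _ ⟨w, w.2, rfl⟩).le⟩ hy⟩ :
      {z : κ.ord.ToType × lam.ord.ToType // z ∈ I ∧ z ≤ y})) ?_
  intro w1 w2 h
  simp only [Subtype.mk.injEq] at h
  exact Subtype.ext (Subtype.ext h)
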